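/- Let n ≥ m ≥ 1 and let v : Fin n → ℝ be nonnegative weights (in arbitrary arrival order), with identical basestations. Let RR be the round-robin allocation RR(i) = 1 + (i mod m) (so every basestation receives at most ⌈n/m⌉ users). Then for every allocation g : Fin n → Fin m, TS(g, v) ≤ ⌈n/m⌉ · TS(RR, v). -/

import Mathlib

/-- Time-sharing utility of an allocation `f` of `n` users to `m` basestations with
weights `w i j`: each basestation's contribution is the sum of weights of its users
divided by its degree (empty basestations contribute `0`, via `0/0 = 0`). -/
noncomputable def TS {n m : ℕ} (f : Fin n → Fin m) (w : Fin n → Fin m → ℝ) : ℝ :=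
  ∑ j : Fin m, (∑ i ∈ Finset.univ.filter (fun i => f i = j), w i j) /
    ((Finset.univ.filter (fun i => f i = j)).card : ℝ)

/-- identical basestations, arbitrary arrival order: for the
round-robin allocation `RR i = i mod m` (0-indexed version of `1 + (i mod m)`),
every allocation `g` satisfies `TS(g, v) ≤ ⌈n/m⌉ · TS(RR, v)`. -/
theorem stmt2 (n m : ℕ) (hm : 1 ≤ m) (hmn : m ≤ n) (v : Fin n → ℝ)
    (hnn : ∀ i, 0 ≤ v i) (g : Fin n → Fin m) :
    TS g (fun i _ => v i) ≤
      (⌈(n : ℝ) / (m : ℝ)⌉₊ : ℝ) *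
        TS (fun i : Fin n => ⟨(i : ℕ) % m, Nat.mod_lt _ (by omega)⟩) (fun i _ => v i) := by
  have hm0 : 0 < m := hm
  set c : ℕ := ⌈(n : ℝ) / (m : ℝ)⌉₊ with hcdef
  set RR : Fin n → Fin m := fun i : Fin n => ⟨(i : ℕ) % m, Nat.mod_lt _ (by omega)⟩ with hRR
  have hc1 : 1 ≤ c := by
    have : (1 : ℝ) ≤ (n : ℝ) / (m : ℝ) := by
      rw [le_div_iff₀ (by positivity)]
      simpa using (Nat.cast_le.mpr hmn : (m : ℝ) ≤ n)
    calc 1 = ⌈(1:ℝ)⌉₊ := by simp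
    _ ≤ c := Nat.ceil_le_ceil this
  have hc0 : (0 : ℝ) < c := by exact_mod_cast hc1
  have htot : ∀ f : Fin n → Fin m,
      ∑ j : Fin m, ∑ i ∈ Finset.univ.filter (fun i => f i = j), v i = ∑ i, v i := by
    intro f
    exact Finset.sum_fiberwise Finset.univ f v
  -- upper bound for g
  have hub : TS g (fun i _ => v i) ≤ ∑ i, v i := by
    rw [← htot g]
    unfold TS
    apply Finset.sum_le_sum
    intro j _
    set s := Finset.univ.filter (fun i => g i = j) with hs
    rcases Nat.eq_zero_or_pos s.card with h0 | h1
    · have : s = ∅ := Finset.card_eq_zero.mp h0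
      simp [this]
    · have hsum : (0:ℝ) ≤ ∑ i ∈ s, v i := Finset.sum_nonneg fun i _ => hnn i
      exact div_le_self hsum (by exact_mod_cast h1)
  -- card bounds for RR fibers
  have hcard_le : ∀ j : Fin m, (Finset.univ.filter (fun i => RR i = j)).card ≤ c := by
    intro j
    have : (Finset.univ.filter (fun i => RR i = j)).card ≤ (Finset.range c).card := by
      refine Finset.card_le_card_of_injOn (fun i => (i : ℕ) / m) ?_ ?_
      · intro i hi
        simp only [Finset.mem_coe, Finset.mem_filter, Finset.mem_univ, true_and, hRR] at hi
        have hmod : (i : ℕ) % m = j := congrArg Fin.val hi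
        simp only [Finset.mem_coe, Finset.mem_range]
        rw [Nat.lt_ceil]
        rw [lt_div_iff₀ (by positivity)]
        have : ((i : ℕ) / m) * m ≤ (i : ℕ) := Nat.div_mul_le_self _ _
        have h2 : ((i : ℕ) / m) * m < n := lt_of_le_of_lt this i.isLt
        exact_mod_cast h2
      · intro a ha b hb hab
        simp only [Finset.mem_coe, Finset.mem_filter, Finset.mem_univ, true_and, hRR] at ha hb
        have ha' : (a : ℕ) % m = j := congrArg Fin.val ha
        have hb' : (b : ℕ) % m = j := congrArg Fin.val hb
        have hab' : (a : ℕ) / m = (b : ℕ) / m := by simpa using hab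
        refine Fin.ext ?_
        calc (a : ℕ) = m * ((a : ℕ) / m) + (a : ℕ) % m := (Nat.div_add_mod _ _).symm
          _ = m * ((b : ℕ) / m) + (b : ℕ) % m := by rw [hab', ha', hb']
          _ = (b : ℕ) := Nat.div_add_mod _ _
    simpa using this
  have hcard_pos : ∀ j : Fin m, 0 < (Finset.univ.filter (fun i => RR i = j)).card := by
    intro j
    apply Finset.card_pos.mpr
    refine ⟨⟨(j : ℕ), lt_of_lt_of_le j.isLt hmn⟩, ?_⟩
    simp only [Finset.mem_filter, Finset.mem_univ, true_and, hRR]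
    exact Fin.ext (by simp [Nat.mod_eq_of_lt j.isLt])
  -- lower bound for RR
  have hlb : (∑ i, v i) / c ≤ TS RR (fun i _ => v i) := by
    rw [← htot RR, Finset.sum_div]
    unfold TS
    apply Finset.sum_le_sum
    intro j _
    set s := Finset.univ.filter (fun i => RR i = j) with hs
    have hsum : (0:ℝ) ≤ ∑ i ∈ s, v i := Finset.sum_nonneg fun i _ => hnn i
    apply div_le_div_of_nonneg_left hsum
    · exact_mod_cast hcard_pos j
    · exact_mod_cast hcard_le j
  calc TS g (fun i _ => v i) ≤ ∑ i, v i := hub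
    _ = (c : ℝ) * ((∑ i, v i) / c) := by field_simp
    _ ≤ (c : ℝ) * TS RR (fun i _ => v i) := by
        apply mul_le_mul_of_nonneg_left hlb (le_of_lt hc0)
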